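/- Let a₁, a₂ ≥ 0, b₁, b₂ ≥ 0 and m₁, m₂ ≥ 1 be integers. The system of congruences a₁x ≡ b₁ (mod m₁) and a₂x ≡ b₂ (mod m₂) has a solution x ∈ ℤ if and only if gcd(m₁,a₁) ∣ b₁, gcd(m₂,a₂) ∣ b₂, and gcd(a₁m₂, a₂m₁) ∣ (a₁b₂ − a₂b₁). -/

import Mathlib

/-- Bézout: if `gcd m a ∣ c` then `c = m*u + a*v` for some integers. -/
lemma bezout_of_gcd_dvd {m a c : ℤ} (h : (Int.gcd m a : ℤ) ∣ c) :
    ∃ u v : ℤ, c = m * u + a * v := by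
  obtain ⟨k, hk⟩ := h
  exact ⟨Int.gcdA m a * k, Int.gcdB m a * k, by
    rw [hk, Int.gcd_eq_gcd_ab]; ring⟩

/-- The system a₁x ≡ b₁ (mod m₁), a₂x ≡ b₂ (mod m₂) has an integer
solution iff gcd(m₁,a₁) ∣ b₁, gcd(m₂,a₂) ∣ b₂ and gcd(a₁m₂, a₂m₁) ∣ a₁b₂ − a₂b₁. -/
theorem system_of_two_linear_congruences_solvable_iff
    (a₁ a₂ b₁ b₂ m₁ m₂ : ℤ)
    (ha₁ : 0 ≤ a₁) (ha₂ : 0 ≤ a₂) (hb₁ : 0 ≤ b₁) (hb₂ : 0 ≤ b₂)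
    (hm₁ : 1 ≤ m₁) (hm₂ : 1 ≤ m₂) :
    (∃ x : ℤ, a₁ * x ≡ b₁ [ZMOD m₁] ∧ a₂ * x ≡ b₂ [ZMOD m₂]) ↔
      ((Int.gcd m₁ a₁ : ℤ) ∣ b₁ ∧ (Int.gcd m₂ a₂ : ℤ) ∣ b₂ ∧
        (Int.gcd (a₁ * m₂) (a₂ * m₁) : ℤ) ∣ (a₁ * b₂ - a₂ * b₁)) := by
  simp only [Int.modEq_iff_dvd]
  constructor
  · rintro ⟨x, h1, h2⟩
    obtain ⟨y₁, hy₁⟩ := h1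
    obtain ⟨y₂, hy₂⟩ := h2
    refine ⟨?_, ?_, ?_⟩
    · have h : b₁ = m₁ * y₁ + a₁ * x := by linarith
      rw [h]
      exact dvd_add ((Int.gcd_dvd_left _ _).mul_right _) ((Int.gcd_dvd_right _ _).mul_right _)
    · have h : b₂ = m₂ * y₂ + a₂ * x := by linarith
      rw [h]
      exact dvd_add ((Int.gcd_dvd_left _ _).mul_right _) ((Int.gcd_dvd_right _ _).mul_right _)
    · have h : a₁ * b₂ - a₂ * b₁ = (a₁ * m₂) * y₂ - (a₂ * m₁) * y₁ := by
        linear_combination a₁ * hy₂ - a₂ * hy₁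
      rw [h]
      exact dvd_sub ((Int.gcd_dvd_left _ _).mul_right _) ((Int.gcd_dvd_right _ _).mul_right _)
  · rintro ⟨h1, h2, h3⟩
    have hm₁0 : m₁ ≠ 0 := by omega
    have hm₂0 : m₂ ≠ 0 := by omega
    have hg₁pos : 0 < Int.gcd m₁ a₁ := Int.gcd_pos_of_ne_zero_left _ hm₁0
    have hg₂pos : 0 < Int.gcd m₂ a₂ := Int.gcd_pos_of_ne_zero_left _ hm₂0
    set d₁ : ℤ := (Int.gcd m₁ a₁ : ℤ) with hd₁def
    set d₂ : ℤ := (Int.gcd m₂ a₂ : ℤ) with hd₂def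
    have hd₁0 : d₁ ≠ 0 := by positivity
    have hd₂0 : d₂ ≠ 0 := by positivity
    set M₁ : ℤ := m₁ / d₁ with hM₁def
    set A₁ : ℤ := a₁ / d₁ with hA₁def
    set M₂ : ℤ := m₂ / d₂ with hM₂def
    set A₂ : ℤ := a₂ / d₂ with hA₂def
    have hM₁ : d₁ * M₁ = m₁ := Int.mul_ediv_cancel' (Int.gcd_dvd_left _ _)
    have hA₁ : d₁ * A₁ = a₁ := Int.mul_ediv_cancel' (Int.gcd_dvd_right _ _)
    have hM₂ : d₂ * M₂ = m₂ := Int.mul_ediv_cancel' (Int.gcd_dvd_left _ _)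
    have hA₂ : d₂ * A₂ = a₂ := Int.mul_ediv_cancel' (Int.gcd_dvd_right _ _)
    have cop₁ : Int.gcd M₁ A₁ = 1 := Int.gcd_div_gcd_div_gcd hg₁pos
    have cop₂ : Int.gcd M₂ A₂ = 1 := Int.gcd_div_gcd_div_gcd hg₂pos
    obtain ⟨B₁, hB₁⟩ := h1
    obtain ⟨B₂, hB₂⟩ := h2
    -- solve each reduced congruence
    obtain ⟨s₁, t₁, hst₁⟩ := bezout_of_gcd_dvd (m := M₁) (a := A₁) (c := (1:ℤ)) (by simp [cop₁])
    obtain ⟨s₂, t₂, hst₂⟩ := bezout_of_gcd_dvd (m := M₂) (a := A₂) (c := (1:ℤ)) (by simp [cop₂])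
    set c₁ : ℤ := t₁ * B₁ with hc₁def
    set c₂ : ℤ := t₂ * B₂ with hc₂def
    have hw₁ : B₁ - A₁ * c₁ = M₁ * (B₁ * s₁) := by
      linear_combination B₁ * hst₁
    have hw₂ : B₂ - A₂ * c₂ = M₂ * (B₂ * s₂) := by
      linear_combination B₂ * hst₂
    -- generalized CRT condition
    set g : ℤ := (Int.gcd M₁ M₂ : ℤ) with hgdef
    have hgM₁ : g ∣ M₁ := Int.gcd_dvd_left _ _
    have hgM₂ : g ∣ M₂ := Int.gcd_dvd_right _ _
    have key : g ∣ A₁ * B₂ - A₂ * B₁ := by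
      have e1 : d₁ * d₂ * g ∣ a₁ * m₂ := by
        rw [← hA₁, ← hM₂]
        obtain ⟨w, hw⟩ := hgM₂
        exact ⟨A₁ * w, by rw [hw]; ring⟩
      have e2 : d₁ * d₂ * g ∣ a₂ * m₁ := by
        rw [← hA₂, ← hM₁]
        obtain ⟨w, hw⟩ := hgM₁
        exact ⟨A₂ * w, by rw [hw]; ring⟩
      have e3 : d₁ * d₂ * g ∣ a₁ * b₂ - a₂ * b₁ :=
        dvd_trans (Int.dvd_coe_gcd e1 e2) h3
      have e4 : a₁ * b₂ - a₂ * b₁ = d₁ * d₂ * (A₁ * B₂ - A₂ * B₁) := by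
        rw [← hA₁, ← hA₂, hB₁, hB₂]; ring
      rw [e4] at e3
      exact (mul_dvd_mul_iff_left (mul_ne_zero hd₁0 hd₂0)).mp e3
    have k1 : g ∣ B₁ - A₁ * c₁ := by rw [hw₁]; exact hgM₁.mul_right _
    have k2 : g ∣ B₂ - A₂ * c₂ := by rw [hw₂]; exact hgM₂.mul_right _
    have key2 : g ∣ A₁ * A₂ * (c₁ - c₂) := by
      have h : A₁ * A₂ * (c₁ - c₂) =
          A₁ * (B₂ - A₂ * c₂) - A₂ * (B₁ - A₁ * c₁) - (A₁ * B₂ - A₂ * B₁) := by ring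
      rw [h]
      exact dvd_sub (dvd_sub (k2.mul_left _) (k1.mul_left _)) key
    have copg₁ : IsCoprime g A₁ :=
      ((Int.isCoprime_iff_gcd_eq_one.mpr cop₁).of_isCoprime_of_dvd_left hgM₁)
    have copg₂ : IsCoprime g A₂ :=
      ((Int.isCoprime_iff_gcd_eq_one.mpr cop₂).of_isCoprime_of_dvd_left hgM₂)
    have hcc : g ∣ c₁ - c₂ :=
      (copg₁.mul_right copg₂).dvd_of_dvd_mul_left key2
    obtain ⟨u, v, huv⟩ := bezout_of_gcd_dvd hcc
    refine ⟨c₁ - M₁ * u, ⟨B₁ * s₁ + A₁ * u, ?_⟩, ⟨B₂ * s₂ - A₂ * v, ?_⟩⟩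
    · rw [← hM₁, ← hA₁, hB₁]
      linear_combination d₁ * hw₁
    · rw [← hM₂, ← hA₂, hB₂]
      linear_combination d₂ * hw₂ - d₂ * A₂ * huv
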